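/- arXiv:2407.04602 — 3 statements merged into one kernel-verified Lean document; each statement's English description precedes it below -/
import Mathlib

section
/- Let z̄ = (x̄, ȳ^1, …, ȳ^N) ∈ S be a minimizer of the recourse problem (RP). Then for every i ∈ {1,…,N}, ȳ^i is a minimizer of the second-stage problem RP₂(x̄, i): ȳ^i is feasible for RP₂(x̄, i) (i.e., W_i ȳ^i = u^i − T_i x̄ and ȳ^i ≥ 0) and there is no y ∈ ℝ^m with W_i y = u^i − T_i x̄, y ≥ 0, Q_i y ≤ Q_i ȳ^i componentwise and Q_i y ≠ Q_i ȳ^i. -/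
open Pointwise

/-- If `z̄ = (x̄, ȳ¹, …, ȳᴺ)` is a minimizer of the recourse problem (RP), then each `ȳⁱ`
is a minimizer of the second-stage problem RP₂(x̄, i). -/
theorem stmt_7 {n m d k l N : ℕ}
    (hn : 0 < n) (hm : 0 < m) (hd : 0 < d) (hk : 0 < k) (hl : 0 < l) (hN : 0 < N)
    (C : Matrix (Fin d) (Fin n) ℝ) (A : Matrix (Fin k) (Fin n) ℝ) (b : Fin k → ℝ)
    (Q : Fin N → Matrix (Fin d) (Fin m) ℝ) (T : Fin N → Matrix (Fin l) (Fin n) ℝ)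
    (W : Fin N → Matrix (Fin l) (Fin m) ℝ) (u : Fin N → Fin l → ℝ)
    (p : Fin N → ℝ) (hp : ∀ i, 0 < p i) (hpsum : ∑ i, p i = 1)
    (xbar : Fin n → ℝ) (ybar : Fin N → Fin m → ℝ)
    -- z̄ is feasible for (RP)
    (hfeas : A.mulVec xbar = b ∧
      (∀ i, (T i).mulVec xbar + (W i).mulVec (ybar i) = u i) ∧
      0 ≤ xbar ∧ ∀ i, 0 ≤ ybar i)
    -- P z̄ is a minimal point of the upper image 𝒫^{RP} = {P z | z ∈ S} + ℝ^d₊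
    (hmin : ¬ ∃ v ∈ ({w | ∃ (x : Fin n → ℝ) (y : Fin N → Fin m → ℝ),
          (A.mulVec x = b ∧ (∀ i, (T i).mulVec x + (W i).mulVec (y i) = u i) ∧
            0 ≤ x ∧ (∀ i, 0 ≤ y i)) ∧
          w = C.mulVec x + ∑ i, p i • (Q i).mulVec (y i)} +
        {w : Fin d → ℝ | 0 ≤ w}),
      v ≤ C.mulVec xbar + ∑ i, p i • (Q i).mulVec (ybar i) ∧
        v ≠ C.mulVec xbar + ∑ i, p i • (Q i).mulVec (ybar i)) :
    ∀ i, ((W i).mulVec (ybar i) = u i - (T i).mulVec xbar ∧ 0 ≤ ybar i) ∧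
      ¬ ∃ y : Fin m → ℝ, (W i).mulVec y = u i - (T i).mulVec xbar ∧ 0 ≤ y ∧
        (Q i).mulVec y ≤ (Q i).mulVec (ybar i) ∧
        (Q i).mulVec y ≠ (Q i).mulVec (ybar i) := by
  obtain ⟨hA, hTW, hx0, hy0⟩ := hfeas
  intro i
  refine ⟨⟨eq_sub_of_add_eq' (hTW i), hy0 i⟩, ?_⟩
  rintro ⟨y, hWy, hy0', hle, hne⟩
  set ynew := Function.update ybar i y with hynew
  have herase : ∑ j ∈ Finset.univ.erase i, p j • (Q j).mulVec (ynew j)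
      = ∑ j ∈ Finset.univ.erase i, p j • (Q j).mulVec (ybar j) := by
    apply Finset.sum_congr rfl
    intro j hj
    rw [hynew, Function.update_of_ne (Finset.ne_of_mem_erase hj)]
  have hsplit : ∀ (g : Fin N → Fin m → ℝ),
      ∑ j, p j • (Q j).mulVec (g j)
        = p i • (Q i).mulVec (g i) + ∑ j ∈ Finset.univ.erase i, p j • (Q j).mulVec (g j) :=
    fun g => (Finset.add_sum_erase _ _ (Finset.mem_univ i)).symm
  apply hmin
  refine ⟨C.mulVec xbar + ∑ j, p j • (Q j).mulVec (ynew j), ?_, ?_, ?_⟩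
  · have hmem : (C.mulVec xbar + ∑ j, p j • (Q j).mulVec (ynew j)) ∈
        {w | ∃ (x : Fin n → ℝ) (yy : Fin N → Fin m → ℝ),
          (A.mulVec x = b ∧ (∀ j, (T j).mulVec x + (W j).mulVec (yy j) = u j) ∧
            0 ≤ x ∧ (∀ j, 0 ≤ yy j)) ∧
          w = C.mulVec x + ∑ j, p j • (Q j).mulVec (yy j)} := by
      refine ⟨xbar, ynew, ⟨hA, ?_, hx0, ?_⟩, rfl⟩
      · intro j
        by_cases h : j = i
        · subst h
          rw [hynew, Function.update_self, hWy]
          abel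
        · rw [hynew, Function.update_of_ne h]
          exact hTW j
      · intro j
        by_cases h : j = i
        · subst h; rw [hynew, Function.update_self]; exact hy0'
        · rw [hynew, Function.update_of_ne h]; exact hy0 j
    have := Set.add_mem_add hmem (show (0 : Fin d → ℝ) ∈ {w : Fin d → ℝ | 0 ≤ w} from Set.mem_setOf_eq ▸ le_refl (0 : Fin d → ℝ))
    simpa using this
  · intro t
    simp only [Pi.add_apply, Finset.sum_apply, Pi.smul_apply, smul_eq_mul]
    have h1 : ∀ (g : Fin N → Fin m → ℝ),
        ∑ j, p j * (Q j).mulVec (g j) t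
          = p i * (Q i).mulVec (g i) t + ∑ j ∈ Finset.univ.erase i, p j * (Q j).mulVec (g j) t :=
      fun g => (Finset.add_sum_erase _ _ (Finset.mem_univ i)).symm
    rw [h1 ynew, h1 ybar]
    have h2 : ∑ j ∈ Finset.univ.erase i, p j * (Q j).mulVec (ynew j) t
        = ∑ j ∈ Finset.univ.erase i, p j * (Q j).mulVec (ybar j) t := by
      apply Finset.sum_congr rfl
      intro j hj
      rw [hynew, Function.update_of_ne (Finset.ne_of_mem_erase hj)]
    rw [h2, hynew, Function.update_self]
    have : p i * (Q i).mulVec y t ≤ p i * (Q i).mulVec (ybar i) t :=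
      mul_le_mul_of_nonneg_left (hle t) (hp i).le
    linarith
  · intro heq
    have hsumeq := add_left_cancel heq
    rw [hsplit ynew, hsplit ybar, herase] at hsumeq
    have := add_right_cancel hsumeq
    rw [hynew, Function.update_self] at this
    exact hne (smul_right_injective (Fin d → ℝ) (ne_of_gt (hp i)) this)
end

section
/- For every x ∈ ℝ^n with Ax = b and x ≥ 0, the set F(x) equals the expectation of the random upper images of the second-stage problems: F(x) = Σ_{i=1}^N p_i · 𝒫(x, i), where 𝒫(x, i) = {Cx + Q_i y | y ∈ ℝ^m, W_i y = u^i − T_i x, y ≥ 0} + ℝ^d₊ is the upper image of the second-stage problem RP₂(x, i) and the right-hand side is a Minkowski sum of scaled sets. -/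
open Pointwise

/-- For every feasible first-stage decision `x`, `F(x)` is the expectation of the random
upper images of the second-stage problems: `F(x) = Σ p_i • 𝒫(x, i)`. -/
theorem stmt_8 {n m d k l N : ℕ}
    (hn : 0 < n) (hm : 0 < m) (hd : 0 < d) (hk : 0 < k) (hl : 0 < l) (hN : 0 < N)
    (C : Matrix (Fin d) (Fin n) ℝ) (A : Matrix (Fin k) (Fin n) ℝ) (b : Fin k → ℝ)
    (Q : Fin N → Matrix (Fin d) (Fin m) ℝ) (T : Fin N → Matrix (Fin l) (Fin n) ℝ)
    (W : Fin N → Matrix (Fin l) (Fin m) ℝ) (u : Fin N → Fin l → ℝ)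
    (p : Fin N → ℝ) (hp : ∀ i, 0 < p i) (hpsum : ∑ i, p i = 1)
    (x : Fin n → ℝ) (hxA : A.mulVec x = b) (hx0 : 0 ≤ x) :
    ({w | ∃ y : Fin N → Fin m → ℝ,
        (∀ i, (T i).mulVec x + (W i).mulVec (y i) = u i) ∧ (∀ i, 0 ≤ y i) ∧
        w = C.mulVec x + ∑ i, p i • (Q i).mulVec (y i)} + {w : Fin d → ℝ | 0 ≤ w}) =
    ∑ i, p i • ({w | ∃ y : Fin m → ℝ, (W i).mulVec y = u i - (T i).mulVec x ∧ 0 ≤ y ∧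
        w = C.mulVec x + (Q i).mulVec y} + {w : Fin d → ℝ | 0 ≤ w}) := by
  ext w
  rw [Set.mem_fintype_sum]
  simp only [Set.mem_add, Set.mem_setOf_eq, Set.mem_smul_set]
  constructor
  · rintro ⟨v, ⟨y, hy1, hy2, rfl⟩, z, hz, rfl⟩
    refine ⟨fun i => p i • (C.mulVec x + (Q i).mulVec (y i) + z), fun i => ?_, ?_⟩
    · exact ⟨C.mulVec x + (Q i).mulVec (y i) + z,
        ⟨C.mulVec x + (Q i).mulVec (y i), ⟨y i, by rw [← hy1 i]; abel, hy2 i, rfl⟩,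
          z, hz, rfl⟩, rfl⟩
    · simp only [smul_add, Finset.sum_add_distrib, ← Finset.sum_smul, hpsum, one_smul]
  · rintro ⟨g, hg, rfl⟩
    choose a ha hgeq using hg
    choose v hv z hz haeq using ha
    choose y hy1 hy2 hveq using hv
    refine ⟨C.mulVec x + ∑ i, p i • (Q i).mulVec (y i),
      ⟨y, fun i => by rw [hy1 i]; abel, hy2, rfl⟩, ∑ i, p i • z i,
      Finset.sum_nonneg fun i _ => smul_nonneg (hp i).le (hz i), ?_⟩
    calc C.mulVec x + ∑ i, p i • (Q i).mulVec (y i) + ∑ i, p i • z i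
        = ∑ i, p i • (C.mulVec x + (Q i).mulVec (y i) + z i) := by
          simp only [smul_add, Finset.sum_add_distrib, ← Finset.sum_smul, hpsum, one_smul]
      _ = ∑ i, g i := by
          refine Finset.sum_congr rfl fun i _ => ?_
          rw [← hgeq i, ← haeq i, hveq i]
end

section
/- Assume the random data Q and W are deterministic, i.e., Q_i = Q and W_i = W for all i ∈ {1,…,N}. Then the upper image of the expected value problem contains the upper image of the recourse problem: 𝒫^{EV} ⊇ 𝒫^{RP}. -/
open Pointwise

/-- If `Q` and `W` are deterministic, the upper image of the expected value problem contains
the upper image of the recourse problem: `𝒫^{EV} ⊇ 𝒫^{RP}`. -/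
theorem stmt_13 {n m d k l N : ℕ}
    (hn : 0 < n) (hm : 0 < m) (hd : 0 < d) (hk : 0 < k) (hl : 0 < l) (hN : 0 < N)
    (C : Matrix (Fin d) (Fin n) ℝ) (A : Matrix (Fin k) (Fin n) ℝ) (b : Fin k → ℝ)
    (Q : Matrix (Fin d) (Fin m) ℝ) (W : Matrix (Fin l) (Fin m) ℝ)
    (T : Fin N → Matrix (Fin l) (Fin n) ℝ) (u : Fin N → Fin l → ℝ)
    (p : Fin N → ℝ) (hp : ∀ i, 0 < p i) (hpsum : ∑ i, p i = 1) :
    ({w | ∃ (x : Fin n → ℝ) (y : Fin m → ℝ),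
        A.mulVec x = b ∧ (∑ i, p i • T i).mulVec x + W.mulVec y = ∑ i, p i • u i ∧
        0 ≤ x ∧ 0 ≤ y ∧ w = C.mulVec x + Q.mulVec y} + {w : Fin d → ℝ | 0 ≤ w}) ⊇
    ({w | ∃ (x : Fin n → ℝ) (y : Fin N → Fin m → ℝ),
        A.mulVec x = b ∧ (∀ i, (T i).mulVec x + W.mulVec (y i) = u i) ∧
        0 ≤ x ∧ (∀ i, 0 ≤ y i) ∧
        w = C.mulVec x + ∑ i, p i • Q.mulVec (y i)} + {w : Fin d → ℝ | 0 ≤ w}) := by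
  rintro w ⟨w1, ⟨x, y, hAx, hTy, hx, hy, rfl⟩, w2, hw2, rfl⟩
  have hmvsum : ∀ (M : Matrix (Fin d) (Fin m) ℝ) (v : Fin N → Fin m → ℝ),
      True → M.mulVec (∑ i, p i • v i) = ∑ i, p i • M.mulVec (v i) := by
    intro M v _
    simp [← Matrix.mulVecLin_apply, map_sum, map_smul, -Matrix.mulVecBilin_apply]
  have hW : W.mulVec (∑ i, p i • y i) = ∑ i, p i • W.mulVec (y i) := by
    simp [← Matrix.mulVecLin_apply, map_sum, map_smul, -Matrix.mulVecBilin_apply]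
  have hT : (∑ i, p i • T i).mulVec x = ∑ i, p i • (T i).mulVec x := by
    ext j
    simp only [Matrix.mulVec, dotProduct, Finset.sum_apply, Matrix.sum_apply,
      Matrix.smul_apply, Pi.smul_apply, smul_eq_mul, Finset.sum_mul]
    rw [Finset.sum_comm]; simp [Finset.mul_sum, mul_assoc]
  refine ⟨_, ⟨x, ∑ i, p i • y i, hAx, ?_, hx, ?_, ?_⟩, w2, hw2, rfl⟩
  · rw [hW, hT, ← Finset.sum_add_distrib]
    congr 1
    ext i
    rw [← smul_add, hTy i]
  · exact Finset.sum_nonneg fun i _ => smul_nonneg (hp i).le (hy i)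
  · congr 1
    simp [← Matrix.mulVecLin_apply, map_sum, map_smul, -Matrix.mulVecBilin_apply]
end
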